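/- arXiv:0801.2227 — 3 statements merged into one kernel-verified Lean document; each statement's English description precedes it below -/
import Mathlib

section
/- Let k ≥ 1 be an integer and φ(r) = ∑_{j=0}^{k} r^{2j+1}/(2j+1)!. Then for all r > 0, φ'(r)φ''(r) − φ(r)φ'''(r) = ∑_{j=0}^{k} (1/((2j)!(2k)!)) (1/(2j+1) − 1/(2k+1)) r^{2k+2j+1}, and in particular this quantity is strictly positive. -/
noncomputable def phi (k : ℕ) (r : ℝ) : ℝ :=
  ∑ j ∈ Finset.range (k + 1), r ^ (2 * j + 1) / (Nat.factorial (2 * j + 1) : ℝ)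

noncomputable def P1 (k : ℕ) (r : ℝ) : ℝ :=
  ∑ j ∈ Finset.range (k + 1), r ^ (2 * j) / (Nat.factorial (2 * j) : ℝ)

noncomputable def P2 (k : ℕ) (r : ℝ) : ℝ :=
  ∑ j ∈ Finset.range (k + 1),
    ((2 * j : ℕ) : ℝ) * r ^ (2 * j - 1) / (Nat.factorial (2 * j) : ℝ)

noncomputable def P3 (k : ℕ) (r : ℝ) : ℝ :=
  ∑ j ∈ Finset.range (k + 1),
    ((2 * j : ℕ) : ℝ) * (((2 * j - 1 : ℕ)) : ℝ) * r ^ (2 * j - 2) / (Nat.factorial (2 * j) : ℝ)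

lemma fact_cast_succ (n : ℕ) :
    ((Nat.factorial (n + 1) : ℝ)) = (n + 1 : ℝ) * (Nat.factorial n : ℝ) := by
  rw [Nat.factorial_succ]; push_cast; ring

lemma deriv_phi (k : ℕ) : deriv (phi k) = P1 k := by
  funext r
  have h : HasDerivAt (phi k)
      (∑ j ∈ Finset.range (k + 1),
        ((2 * j + 1 : ℕ) : ℝ) * r ^ (2 * j) / (Nat.factorial (2 * j + 1) : ℝ)) r := by
    refine HasDerivAt.fun_sum fun j _ => ?_
    simpa using (hasDerivAt_pow (2 * j + 1) r).div_const (Nat.factorial (2 * j + 1) : ℝ)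
  rw [h.deriv, P1]
  refine Finset.sum_congr rfl fun j _ => ?_
  rw [fact_cast_succ (2 * j)]
  have h1 : (Nat.factorial (2 * j) : ℝ) ≠ 0 := by positivity
  have h2 : (2 * (j : ℝ) + 1) ≠ 0 := by positivity
  push_cast
  field_simp

lemma deriv_P1 (k : ℕ) : deriv (P1 k) = P2 k := by
  funext r
  have h : HasDerivAt (P1 k)
      (∑ j ∈ Finset.range (k + 1),
        ((2 * j : ℕ) : ℝ) * r ^ (2 * j - 1) / (Nat.factorial (2 * j) : ℝ)) r := by
    refine HasDerivAt.fun_sum fun j _ => ?_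
    simpa using (hasDerivAt_pow (2 * j) r).div_const (Nat.factorial (2 * j) : ℝ)
  rw [h.deriv, P2]

lemma deriv_P2 (k : ℕ) : deriv (P2 k) = P3 k := by
  funext r
  have h : HasDerivAt (P2 k)
      (∑ j ∈ Finset.range (k + 1),
        ((2 * j : ℕ) : ℝ) * (((2 * j - 1 : ℕ)) : ℝ) * r ^ (2 * j - 2)
          / (Nat.factorial (2 * j) : ℝ)) r := by
    refine HasDerivAt.fun_sum fun j _ => ?_
    have := (((hasDerivAt_pow (2 * j - 1) r).const_mul ((2 * j : ℕ) : ℝ)).div_const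
      (Nat.factorial (2 * j) : ℝ))
    have he : 2 * j - 1 - 1 = 2 * j - 2 := by omega
    rw [he] at this
    convert this using 1
    · rfl
    ring
  rw [h.deriv, P3]

lemma P2_eq (k : ℕ) (r : ℝ) :
    P2 k r = phi k r - r ^ (2 * k + 1) / (Nat.factorial (2 * k + 1) : ℝ) := by
  rw [P2, Finset.sum_range_succ' _ k, phi, Finset.sum_range_succ _ k]
  simp only [Nat.mul_zero, Nat.cast_zero, zero_mul, zero_div, add_zero]
  rw [add_sub_cancel_right]
  refine Finset.sum_congr rfl fun j _ => ?_
  have h1 : 2 * (j + 1) = (2 * j + 1) + 1 := by ring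
  rw [h1, show (2 * j + 1) + 1 - 1 = 2 * j + 1 from by omega, fact_cast_succ (2 * j + 1)]
  have h3 : (Nat.factorial (2 * j + 1) : ℝ) ≠ 0 := by positivity
  push_cast
  field_simp

lemma P3_eq (k : ℕ) (r : ℝ) :
    P3 k r = P1 k r - r ^ (2 * k) / (Nat.factorial (2 * k) : ℝ) := by
  rw [P3, Finset.sum_range_succ' _ k, P1, Finset.sum_range_succ _ k]
  simp only [Nat.mul_zero, Nat.cast_zero, zero_mul, zero_div, add_zero]
  rw [add_sub_cancel_right]
  refine Finset.sum_congr rfl fun j _ => ?_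
  have h1 : 2 * (j + 1) = (2 * j + 1) + 1 := by ring
  rw [h1, show (2 * j + 1) + 1 - 1 = 2 * j + 1 from by omega,
    show (2 * j + 1) + 1 - 2 = 2 * j from by omega,
    fact_cast_succ (2 * j + 1), fact_cast_succ (2 * j)]
  have h3 : (Nat.factorial (2 * j) : ℝ) ≠ 0 := by positivity
  push_cast
  field_simp

theorem stmt_0 (k : ℕ) (hk : 1 ≤ k) :
    ∀ r : ℝ, 0 < r →
      deriv (phi k) r * deriv (deriv (phi k)) r
          - phi k r * deriv (deriv (deriv (phi k))) r
        = ∑ j ∈ Finset.range (k + 1),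
            (1 / ((Nat.factorial (2 * j) : ℝ) * (Nat.factorial (2 * k) : ℝ)))
              * (1 / (2 * (j : ℝ) + 1) - 1 / (2 * (k : ℝ) + 1)) * r ^ (2 * k + 2 * j + 1)
      ∧ 0 < deriv (phi k) r * deriv (deriv (phi k)) r
              - phi k r * deriv (deriv (deriv (phi k))) r := by
  intro r hr
  have heq : deriv (phi k) r * deriv (deriv (phi k)) r
          - phi k r * deriv (deriv (deriv (phi k))) r
        = ∑ j ∈ Finset.range (k + 1),
            (1 / ((Nat.factorial (2 * j) : ℝ) * (Nat.factorial (2 * k) : ℝ)))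
              * (1 / (2 * (j : ℝ) + 1) - 1 / (2 * (k : ℝ) + 1)) * r ^ (2 * k + 2 * j + 1) := by
    rw [deriv_phi, deriv_P1, deriv_P2, P2_eq, P3_eq]
    have hmain : P1 k r * (phi k r - r ^ (2 * k + 1) / (Nat.factorial (2 * k + 1) : ℝ))
        - phi k r * (P1 k r - r ^ (2 * k) / (Nat.factorial (2 * k) : ℝ))
        = phi k r * (r ^ (2 * k) / (Nat.factorial (2 * k) : ℝ))
          - P1 k r * (r ^ (2 * k + 1) / (Nat.factorial (2 * k + 1) : ℝ)) := by ring
    rw [hmain, phi, P1, Finset.sum_mul, Finset.sum_mul, ← Finset.sum_sub_distrib]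
    refine Finset.sum_congr rfl fun j _ => ?_
    have e1 : 2 * k + 2 * j + 1 = (2 * j + 1) + 2 * k := by ring
    have e2 : (2 * j) + (2 * k + 1) = (2 * j + 1) + 2 * k := by ring
    rw [e1, pow_add, ← e2]
    rw [fact_cast_succ (2 * j), fact_cast_succ (2 * k), pow_add]
    have h1 : (Nat.factorial (2 * j) : ℝ) ≠ 0 := by positivity
    have h2 : (Nat.factorial (2 * k) : ℝ) ≠ 0 := by positivity
    have h3 : (2 * (j : ℝ) + 1) ≠ 0 := by positivity
    have h4 : (2 * (k : ℝ) + 1) ≠ 0 := by positivity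
    push_cast
    field_simp
    ring
  refine ⟨heq, ?_⟩
  rw [heq]
  apply Finset.sum_pos'
  · intro j hj
    have hjk : j ≤ k := by
      simpa [Nat.lt_succ_iff] using Finset.mem_range.mp hj
    have hsub : 1 / (2 * (k : ℝ) + 1) ≤ 1 / (2 * (j : ℝ) + 1) := by
      apply one_div_le_one_div_of_le
      · positivity
      · have : (j : ℝ) ≤ (k : ℝ) := by exact_mod_cast hjk
        linarith
    have : (0 : ℝ) ≤ 1 / (2 * (j : ℝ) + 1) - 1 / (2 * (k : ℝ) + 1) := by linarith
    have hr' : (0 : ℝ) ≤ r ^ (2 * k + 2 * j + 1) := le_of_lt (pow_pos hr _)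
    have hc : (0 : ℝ) ≤ 1 / ((Nat.factorial (2 * j) : ℝ) * (Nat.factorial (2 * k) : ℝ)) := by
      positivity
    exact mul_nonneg (mul_nonneg hc this) hr'
  · refine ⟨0, Finset.mem_range.mpr (Nat.succ_pos k), ?_⟩
    have hk' : (1 : ℝ) ≤ (k : ℝ) := by exact_mod_cast hk
    have hpos : 0 < 1 / (2 * ((0 : ℕ) : ℝ) + 1) - 1 / (2 * (k : ℝ) + 1) := by
      have : 1 / (2 * (k : ℝ) + 1) < 1 := by
        rw [div_lt_one (by positivity)]; linarith
      simp only [Nat.cast_zero, mul_zero, zero_add, one_div_one]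
      linarith
    have hc : (0 : ℝ) < 1 / ((Nat.factorial (2 * 0) : ℝ) * (Nat.factorial (2 * k) : ℝ)) := by
      positivity
    exact mul_pos (mul_pos hc hpos) (pow_pos hr _)
end

section
/- Let k ≥ 1 and φ(r) = ∑_{j=0}^{k} r^{2j+1}/(2j+1)!. Then for all r > 0, φ'(r)·((φ'(r))² − φ(r)φ''(r)) > 1. -/
noncomputable def psi (k : ℕ) (r : ℝ) : ℝ :=
  ∑ j ∈ Finset.range (k + 1), r ^ (2 * j) / (Nat.factorial (2 * j) : ℝ)

lemma hasDerivAt_phi (k : ℕ) (r : ℝ) : HasDerivAt (phi k) (psi k r) r := by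
  have h : ∀ j ∈ Finset.range (k + 1),
      HasDerivAt (fun r : ℝ => r ^ (2 * j + 1) / (Nat.factorial (2 * j + 1) : ℝ))
        (r ^ (2 * j) / (Nat.factorial (2 * j) : ℝ)) r := by
    intro j _
    have h1 := (hasDerivAt_pow (2 * j + 1) r).div_const ((Nat.factorial (2 * j + 1) : ℝ))
    refine h1.congr_deriv ?_
    have hfac : Nat.factorial (2 * j + 1) = (2 * j + 1) * Nat.factorial (2 * j) :=
      Nat.factorial_succ _
    have h2 : 2 * j + 1 - 1 = 2 * j := by omega
    rw [hfac, h2]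
    have f0 : (Nat.factorial (2 * j) : ℝ) ≠ 0 := by positivity
    push_cast
    field_simp
  exact HasDerivAt.fun_sum h

lemma hasDerivAt_psi (m : ℕ) (r : ℝ) : HasDerivAt (psi (m + 1)) (phi m r) r := by
  have h : ∀ j ∈ Finset.range (m + 1 + 1),
      HasDerivAt (fun r : ℝ => r ^ (2 * j) / (Nat.factorial (2 * j) : ℝ))
        ((2 * j : ℕ) * r ^ (2 * j - 1) / (Nat.factorial (2 * j) : ℝ)) r := by
    intro j _
    exact (hasDerivAt_pow (2 * j) r).div_const _
  have h2 := HasDerivAt.fun_sum h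
  refine h2.congr_deriv ?_
  rw [Finset.sum_range_succ']
  simp only [Nat.mul_zero, Nat.cast_zero, zero_mul, zero_div, add_zero]
  unfold phi
  apply Finset.sum_congr rfl
  intro i _
  have hfac : Nat.factorial (2 * (i + 1)) = (2 * (i + 1)) * Nat.factorial (2 * i + 1) := by
    have : 2 * (i + 1) = (2 * i + 1) + 1 := by ring
    rw [this, Nat.factorial_succ]
  have hexp : 2 * (i + 1) - 1 = 2 * i + 1 := by omega
  rw [hfac, hexp]
  have f0 : (Nat.factorial (2 * i + 1) : ℝ) ≠ 0 := by positivity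
  have f1 : (2 * (i + 1) : ℝ) ≠ 0 := by positivity
  push_cast
  field_simp

lemma phi_zero (k : ℕ) : phi k 0 = 0 := by
  unfold phi
  apply Finset.sum_eq_zero
  intro j _
  simp

lemma psi_zero (k : ℕ) : psi k 0 = 1 := by
  unfold psi
  rw [Finset.sum_range_succ']
  simp

lemma phi_pos (k : ℕ) {r : ℝ} (hr : 0 < r) : 0 < phi k r := by
  unfold phi
  apply Finset.sum_pos
  · intro j _
    positivity
  · exact Finset.nonempty_range_add_one

lemma psi_gt_one (m : ℕ) {r : ℝ} (hr : 0 < r) : 1 < psi (m + 1) r := by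
  unfold psi
  rw [Finset.sum_range_succ']
  simp only [Nat.mul_zero, pow_zero, Nat.factorial_zero, Nat.cast_one, div_one]
  have : 0 < ∑ i ∈ Finset.range (m + 1), r ^ (2 * (i + 1)) / (Nat.factorial (2 * (i + 1)) : ℝ) := by
    apply Finset.sum_pos
    · intro j _
      positivity
    · exact Finset.nonempty_range_add_one
  linarith

lemma key_deriv_pos (m : ℕ) {r : ℝ} (hr : 0 < r) :
    0 < psi (m + 1) r * phi m r - phi (m + 1) r * psi m r := by
  have hpsi : psi (m + 1) r = psi m r + r ^ (2 * (m + 1)) / (Nat.factorial (2 * (m + 1)) : ℝ) := by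
    unfold psi; rw [Finset.sum_range_succ]
  have hphi : phi (m + 1) r
      = phi m r + r ^ (2 * (m + 1) + 1) / (Nat.factorial (2 * (m + 1) + 1) : ℝ) := by
    unfold phi; rw [Finset.sum_range_succ]
  rw [hpsi, hphi]
  have key : r ^ (2 * (m + 1) + 1) / (Nat.factorial (2 * (m + 1) + 1) : ℝ) * psi m r
      < r ^ (2 * (m + 1)) / (Nat.factorial (2 * (m + 1)) : ℝ) * phi m r := by
    unfold psi phi
    rw [Finset.mul_sum, Finset.mul_sum]
    apply Finset.sum_lt_sum_of_nonempty Finset.nonempty_range_add_one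
    intro j hjmem
    have hjm : j < m + 1 := Finset.mem_range.mp hjmem
    rw [div_mul_div_comm, div_mul_div_comm, ← pow_add, ← pow_add]
    have he : 2 * (m + 1) + 1 + 2 * j = 2 * (m + 1) + (2 * j + 1) := by ring
    rw [he]
    apply div_lt_div_of_pos_left
    · positivity
    · positivity
    · have hn : Nat.factorial (2 * (m + 1)) * Nat.factorial (2 * j + 1)
          < Nat.factorial (2 * (m + 1) + 1) * Nat.factorial (2 * j) := by
        rw [Nat.factorial_succ (2 * (m + 1)), Nat.factorial_succ (2 * j)]
        have h1 : 0 < Nat.factorial (2 * (m + 1)) := Nat.factorial_pos _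
        have h2 : 0 < Nat.factorial (2 * j) := Nat.factorial_pos _
        have hj : 2 * j + 1 < 2 * (m + 1) + 1 := by omega
        have : Nat.factorial (2 * (m + 1)) * ((2 * j + 1) * Nat.factorial (2 * j))
            < Nat.factorial (2 * (m + 1)) * ((2 * (m + 1) + 1) * Nat.factorial (2 * j)) := by
          exact Nat.mul_lt_mul_of_pos_left (Nat.mul_lt_mul_of_pos_right hj h2) h1
        calc Nat.factorial (2 * (m + 1)) * ((2 * j + 1) * Nat.factorial (2 * j))
            < Nat.factorial (2 * (m + 1)) * ((2 * (m + 1) + 1) * Nat.factorial (2 * j)) := this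
          _ = (2 * (m + 1) + 1) * Nat.factorial (2 * (m + 1)) * Nat.factorial (2 * j) := by ring
      exact_mod_cast hn
  nlinarith [key]

theorem stmt_1 (k : ℕ) (hk : 1 ≤ k) :
    ∀ r : ℝ, 0 < r →
      1 < deriv (phi k) r * ((deriv (phi k) r) ^ 2 - phi k r * deriv (deriv (phi k)) r) := by
  obtain ⟨m, rfl⟩ : ∃ m, k = m + 1 := ⟨k - 1, (Nat.succ_pred_eq_of_pos hk).symm⟩
  intro r hr
  have hde : deriv (phi (m + 1)) = psi (m + 1) := funext fun x => (hasDerivAt_phi _ x).deriv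
  rw [hde, (hasDerivAt_psi m r).deriv]
  -- goal : 1 < psi (m+1) r * (psi (m+1) r ^ 2 - phi (m+1) r * phi m r)
  set g : ℝ → ℝ := fun x => psi (m + 1) x ^ 2 - phi (m + 1) x * phi m x with hgdef
  have hD : ∀ x : ℝ, HasDerivAt g (psi (m + 1) x * phi m x - phi (m + 1) x * psi m x) x := by
    intro x
    have h1 := hasDerivAt_psi m x
    have h2 := hasDerivAt_phi (m + 1) x
    have h3 := hasDerivAt_phi m x
    have hsum := (h1.pow 2).sub (h2.mul h3)
    refine hsum.congr_deriv ?_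
    ring
  have hgcont : ContinuousOn g (Set.Ici (0 : ℝ)) := fun x _ =>
    ((hD x).differentiableAt.continuousAt).continuousWithinAt
  have hmono : StrictMonoOn g (Set.Ici (0 : ℝ)) := by
    apply strictMonoOn_of_deriv_pos (convex_Ici 0) hgcont
    intro x hx
    rw [interior_Ici] at hx
    rw [(hD x).deriv]
    exact key_deriv_pos m hx
  have hg0 : g 0 = 1 := by
    simp [hgdef, phi_zero, psi_zero]
  have hg1 : 1 < g r := by
    have := hmono (Set.self_mem_Ici) (Set.mem_Ici.mpr hr.le) hr
    rwa [hg0] at this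
  have hps : 1 < psi (m + 1) r := psi_gt_one m hr
  have hgr : g r = psi (m + 1) r ^ 2 - phi (m + 1) r * phi m r := rfl
  nlinarith [hg1, hps]
end

section
/- Let n ≥ 4, k ≥ 1, and φ(r) = ∑_{j=0}^{k} r^{2j+1}/(2j+1)!. Then for all r > 0, the quantity (n−3)φ'(r)((φ'(r))² − φ(r)φ''(r)) + φ(r)(φ'(r)φ''(r) − φ(r)φ'''(r)) is strictly positive. -/
lemma hasDerivAt_psi_s5 (k : ℕ) (hk : 1 ≤ k) (r : ℝ) :
    HasDerivAt (psi k) (phi (k-1) r) r := by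
  obtain ⟨m, rfl⟩ : ∃ m, k = m + 1 := ⟨k - 1, (Nat.succ_pred_eq_of_pos hk).symm⟩
  have h : ∀ j ∈ Finset.range (m+2),
      HasDerivAt (fun r : ℝ => r ^ (2*j) / (Nat.factorial (2*j) : ℝ))
        (((2*j : ℕ) : ℝ) * r ^ (2*j-1) / (Nat.factorial (2*j) : ℝ)) r :=
    fun j _ => (hasDerivAt_pow (2*j) r).div_const _
  have H := HasDerivAt.fun_sum h
  have hsum : ∑ j ∈ Finset.range (m+2), ((2*j : ℕ) : ℝ) * r ^ (2*j-1) / (Nat.factorial (2*j) : ℝ)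
      = phi m r := by
    rw [Finset.sum_range_succ']
    simp only [Nat.mul_zero, Nat.cast_zero, mul_zero, zero_mul, zero_div, add_zero]
    apply Finset.sum_congr rfl
    intro j _
    have e1 : 2*(j+1) = (2*j+1)+1 := by ring
    have e2 : 2*(j+1) - 1 = 2*j+1 := by omega
    rw [e1, Nat.factorial_succ]
    simp only [Nat.add_sub_cancel]
    have h2 : (Nat.factorial (2*j+1) : ℝ) ≠ 0 := Nat.cast_ne_zero.mpr (Nat.factorial_ne_zero _)
    have h3 : ((2*j+1+1 : ℕ) : ℝ) ≠ 0 := by positivity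
    push_cast
    field_simp
  have : HasDerivAt (psi (m+1)) (∑ j ∈ Finset.range (m+2), ((2*j : ℕ) : ℝ) * r ^ (2*j-1) / (Nat.factorial (2*j) : ℝ)) r := by
    exact H
  rw [hsum] at this
  simpa using this

lemma psi_pos (k : ℕ) {r : ℝ} (hr : 0 ≤ r) : 0 < psi k r := by
  unfold psi
  apply Finset.sum_pos'
  · intro j _; positivity
  · exact ⟨0, Finset.mem_range.mpr (Nat.succ_pos k), by norm_num⟩

lemma phi_nonneg (k : ℕ) {r : ℝ} (hr : 0 ≤ r) : 0 ≤ phi k r := by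
  unfold phi; apply Finset.sum_nonneg; intro j _; positivity

lemma D_pos (k : ℕ) (hk : 1 ≤ k) {r : ℝ} (hr : 0 < r) :
    0 < psi k r * phi (k-1) r - phi k r * psi (k-1) r := by
  obtain ⟨m, rfl⟩ : ∃ m, k = m + 1 := ⟨k - 1, (Nat.succ_pred_eq_of_pos hk).symm⟩
  simp only [Nat.add_sub_cancel]
  have hpsi : psi (m+1) r = psi m r + r ^ (2*(m+1)) / (Nat.factorial (2*(m+1)) : ℝ) := by
    rw [psi, Finset.sum_range_succ]; rfl
  have hphi : phi (m+1) r = phi m r + r ^ (2*(m+1)+1) / (Nat.factorial (2*(m+1)+1) : ℝ) := by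
    rw [phi, Finset.sum_range_succ]; rfl
  rw [hpsi, hphi]
  have key : 0 < phi m r * (r ^ (2*(m+1)) / (Nat.factorial (2*(m+1)) : ℝ))
      - psi m r * (r ^ (2*(m+1)+1) / (Nat.factorial (2*(m+1)+1) : ℝ)) := by
    rw [sub_pos, phi, psi, Finset.sum_mul, Finset.sum_mul]
    apply Finset.sum_lt_sum_of_nonempty ⟨0, Finset.mem_range.mpr (Nat.succ_pos m)⟩
    intro j hj
    have hjm : j ≤ m := Nat.lt_succ_iff.mp (Finset.mem_range.mp hj)
    rw [div_mul_div_comm, div_mul_div_comm, ← pow_add, ← pow_add]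
    have he : 2*j + (2*(m+1)+1) = 2*j+1 + 2*(m+1) := by ring
    rw [he]
    apply div_lt_div_of_pos_left (by positivity) (by positivity)
    have hnat : Nat.factorial (2*j+1) * Nat.factorial (2*(m+1))
        < Nat.factorial (2*j) * Nat.factorial (2*(m+1)+1) := by
      rw [Nat.factorial_succ (2*j), Nat.factorial_succ (2*(m+1))]
      have h1 : 0 < Nat.factorial (2*j) := Nat.factorial_pos _
      have h2 : 0 < Nat.factorial (2*(m+1)) := Nat.factorial_pos _
      have h3 : 2*j+1 < 2*(m+1)+1 := by omega
      calc (2*j+1) * Nat.factorial (2*j) * Nat.factorial (2*(m+1))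
          < (2*(m+1)+1) * Nat.factorial (2*j) * Nat.factorial (2*(m+1)) :=
            Nat.mul_lt_mul_of_lt_of_le (Nat.mul_lt_mul_of_lt_of_le h3 le_rfl h1) le_rfl h2
        _ = Nat.factorial (2*j) * ((2*(m+1)+1) * Nat.factorial (2*(m+1))) := by ring
    exact_mod_cast hnat
  nlinarith [key]

lemma continuous_phi (k : ℕ) : Continuous (phi k) := by
  unfold phi
  exact continuous_finset_sum _ fun j _ => (continuous_pow _).div_const _

lemma continuous_psi (k : ℕ) : Continuous (psi k) := by
  unfold psi
  exact continuous_finset_sum _ fun j _ => (continuous_pow _).div_const _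

lemma hasDerivAt_C (k : ℕ) (hk : 1 ≤ k) (r : ℝ) :
    HasDerivAt (fun r => psi k r ^ 2 - phi k r * phi (k-1) r)
      (psi k r * phi (k-1) r - phi k r * psi (k-1) r) r := by
  have h1 := ((hasDerivAt_psi_s5 k hk r).pow 2).sub
    ((hasDerivAt_phi k r).mul (hasDerivAt_phi (k-1) r))
  refine h1.congr_deriv ?_
  push_cast
  ring

lemma C_pos (k : ℕ) (hk : 1 ≤ k) {r : ℝ} (hr : 0 < r) :
    0 < psi k r ^ 2 - phi k r * phi (k-1) r := by
  set F : ℝ → ℝ := fun r => psi k r ^ 2 - phi k r * phi (k-1) r with hF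
  have hmono : StrictMonoOn F (Set.Ici 0) := by
    apply strictMonoOn_of_deriv_pos (convex_Ici 0)
    · exact (((continuous_psi k).pow 2).sub
        ((continuous_phi k).mul (continuous_phi (k-1)))).continuousOn
    · intro x hx
      rw [interior_Ici] at hx
      rw [(hasDerivAt_C k hk x).deriv]
      exact D_pos k hk hx
  have h0 : F 0 = 1 := by simp [hF, psi_zero, phi_zero]
  have h2 := hmono (Set.self_mem_Ici) (Set.mem_Ici.mpr hr.le) hr
  rw [h0] at h2
  have h3 : (0:ℝ) < F r := lt_trans one_pos h2
  simpa [hF] using h3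

theorem stmt_5 (n k : ℕ) (hn : 4 ≤ n) (hk : 1 ≤ k) :
    ∀ r : ℝ, 0 < r →
      0 < ((n : ℝ) - 3) * deriv (phi k) r *
            ((deriv (phi k) r) ^ 2 - phi k r * deriv (deriv (phi k)) r)
          + phi k r *
            (deriv (phi k) r * deriv (deriv (phi k)) r
              - phi k r * deriv (deriv (deriv (phi k))) r) := by
  intro r hr
  have d1 : deriv (phi k) = psi k := funext fun x => (hasDerivAt_phi k x).deriv
  have d2 : deriv (psi k) = phi (k-1) := funext fun x => (hasDerivAt_psi_s5 k hk x).deriv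
  have d3 : deriv (phi (k-1)) = psi (k-1) := funext fun x => (hasDerivAt_phi (k-1) x).deriv
  rw [d1, d2, d3]
  have hn3 : (1:ℝ) ≤ (n:ℝ) - 3 := by
    have : (4:ℝ) ≤ (n:ℝ) := by exact_mod_cast hn
    linarith
  exact add_pos
    (mul_pos (mul_pos (by linarith) (psi_pos k hr.le)) (C_pos k hk hr))
    (mul_pos (phi_pos k hr) (D_pos k hk hr))
end
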